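/- Let (u_j^n)_{j∈ℤ, n≥0} be generated by the nonlocal scheme u_j^{n+1} = u_j^n − Δt Σ_{k=1}^{r∨1} W_k (g(u_j^n, u_{j+k}^n) − g(u_{j−k}^n, u_j^n)) from bounded initial data (u_j^0), and set B₁ = inf_j u_j^0, B₂ = sup_j u_j^0. Assume g is monotone (nondecreasing in its first argument, nonincreasing in its second), continuously differentiable on [B₁,B₂]², and that the CFL condition (Δt/Δx)(sup_{[B₁,B₂]²}|∂₁g| + sup_{[B₁,B₂]²}|∂₂g|) ≤ 1 holds. Then the discrete maximum principle holds: B₁ ≤ u_j^n ≤ B₂ for all n ≥ 0 and all j ∈ ℤ. -/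

import Mathlib

open MeasureTheory Real Set Filter Topology

noncomputable section

/-- The nonlocal entropy flux `q(a,b;c) = g(a ⊔ c, b ⊔ c) - g(a ⊓ c, b ⊓ c)`. -/
def entFlux (g : ℝ → ℝ → ℝ) (a b c : ℝ) : ℝ :=
  g (max a c) (max b c) - g (min a c) (min b c)

/-- An admissible nonlocal interaction kernel with horizon `δ`. -/
structure AdmissibleKernel (δ : ℝ) (ω : ℝ → ℝ) : Prop where
  nonneg : ∀ h, 0 ≤ ω h
  integrable : Integrable ω
  supp : ∀ h, h ∉ Set.Icc 0 δ → ω h = 0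
  normalized : (∫ h in (0:ℝ)..δ, ω h) = 1

/-- `r = ⌊δ / Δx⌋`. -/
def gridR (δ Δx : ℝ) : ℕ := ⌊δ / Δx⌋₊

/-- `r ∨ 1 = max r 1`. -/
def gridR1 (δ Δx : ℝ) : ℕ := max (gridR δ Δx) 1

/-- The quadrature weights `W_k`. -/
def qWeight (ω : ℝ → ℝ) (δ Δx : ℝ) (k : ℕ) : ℝ :=
  (1 / ((k : ℝ) * Δx)) * (∫ h in (((k : ℝ) - 1) * Δx)..((k : ℝ) * Δx), ω h)
    + (if k = gridR δ Δx then 1 else 0) / ((gridR1 δ Δx : ℝ) * Δx)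
        * (∫ h in ((gridR δ Δx : ℝ) * Δx)..δ, ω h)

/-- One step of the nonlocal scheme `H`. -/
def schemeStep (g : ℝ → ℝ → ℝ) (Δt : ℝ) (W : ℕ → ℝ) (R : ℕ) (v : ℤ → ℝ) (j : ℤ) : ℝ :=
  v j - Δt * ∑ k ∈ Finset.Icc 1 R,
    W k * (g (v j) (v (j + (k : ℤ))) - g (v (j - (k : ℤ))) (v j))

/-- Iterates of the nonlocal scheme. -/
def schemeSol (g : ℝ → ℝ → ℝ) (Δt : ℝ) (W : ℕ → ℝ) (R : ℕ) (v0 : ℤ → ℝ) : ℕ → ℤ → ℝ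
  | 0 => v0
  | n + 1 => schemeStep g Δt W R (schemeSol g Δt W R v0 n)

/-- Cell averages of the initial data. -/
def cellAvg (u₀ : ℝ → ℝ) (Δx : ℝ) (j : ℤ) : ℝ :=
  (1 / Δx) * ∫ x in (((j : ℝ) - 1/2) * Δx)..(((j : ℝ) + 1/2) * Δx), u₀ x

/-- The numerical solution of the nonlocal scheme with initial data `u₀`. -/
def numSol (g : ℝ → ℝ → ℝ) (ω : ℝ → ℝ) (δ Δx Δt : ℝ) (u₀ : ℝ → ℝ) : ℕ → ℤ → ℝ :=
  schemeSol g Δt (qWeight ω δ Δx) (gridR1 δ Δx) (cellAvg u₀ Δx)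

/-- Piecewise constant interpolant of a grid function. -/
def pcInterp (Δx Δt : ℝ) (v : ℕ → ℤ → ℝ) (x t : ℝ) : ℝ :=
  v ⌊t / Δt⌋₊ ⌊x / Δx + 1/2⌋

/-- The piecewise-constant numerical solution `u^{Δ,δ}`. -/
def numInterp (g : ℝ → ℝ → ℝ) (ω : ℝ → ℝ) (δ Δx Δt : ℝ) (u₀ : ℝ → ℝ) (x t : ℝ) : ℝ :=
  pcInterp Δx Δt (numSol g ω δ Δx Δt u₀) x t

/-- `h^Δ(h) = kΔx` for `h ∈ [(k-1)Δx, kΔx)`. -/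
def hDelta (Δx h : ℝ) : ℝ := ((⌊h / Δx⌋ : ℝ) + 1) * Δx

/-- Interpolant of the test function: affine in `x` on each grid cell, piecewise
constant in `t`. -/
def phiDelta (φ : ℝ → ℝ → ℝ) (Δx Δt : ℝ) (x t : ℝ) : ℝ :=
  φ (((⌊x / Δx + 1/2⌋ : ℝ) - 1/2) * Δx) ((⌊t / Δt⌋₊ : ℝ) * Δt)
    + ((x - ((⌊x / Δx + 1/2⌋ : ℝ) - 1/2) * Δx) / Δx)
      * (φ (((⌊x / Δx + 1/2⌋ : ℝ) + 1/2) * Δx) ((⌊t / Δt⌋₊ : ℝ) * Δt)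
          - φ (((⌊x / Δx + 1/2⌋ : ℝ) - 1/2) * Δx) ((⌊t / Δt⌋₊ : ℝ) * Δt))

/-- The `2r`-point numerical flux `𝕘`. -/
def bigFlux (g : ℝ → ℝ → ℝ) (W : ℕ → ℝ) (Δx : ℝ) (R : ℕ) (v : ℤ → ℝ) (j : ℤ) : ℝ :=
  ∑ k ∈ Finset.Icc 1 R, ∑ l ∈ Finset.Icc 1 k,
    g (v (j - (l : ℤ))) (v (j - (l : ℤ) + (k : ℤ))) * W k * Δx

/-- Supremum of `|∂₁ g|` over `[B₁,B₂] × [B₁,B₂]`. -/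
def supAbsDeriv1 (g : ℝ → ℝ → ℝ) (B₁ B₂ : ℝ) : ℝ :=
  sSup ((fun p : ℝ × ℝ => |derivWithin (fun a => g a p.2) (Set.Icc B₁ B₂) p.1|) ''
    (Set.Icc B₁ B₂ ×ˢ Set.Icc B₁ B₂))

/-- Supremum of `|∂₂ g|` over `[B₁,B₂] × [B₁,B₂]`. -/
def supAbsDeriv2 (g : ℝ → ℝ → ℝ) (B₁ B₂ : ℝ) : ℝ :=
  sSup ((fun p : ℝ × ℝ => |derivWithin (fun b => g p.1 b) (Set.Icc B₁ B₂) p.2|) ''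
    (Set.Icc B₁ B₂ ×ˢ Set.Icc B₁ B₂))

/-- Entropy solution of the nonlocal conservation law on `ℝ × [0,T]`. -/
structure IsEntropySolNonlocal (T δ : ℝ) (ω : ℝ → ℝ) (g : ℝ → ℝ → ℝ)
    (u₀ : ℝ → ℝ) (u : ℝ → ℝ → ℝ) : Prop where
  bounded : ∃ M, ∀ x t, |u x t| ≤ M
  integrable : ∀ t ∈ Set.Icc (0:ℝ) T, Integrable (fun x => u x t)
  contL1 : ∀ t₀ ∈ Set.Icc (0:ℝ) T,
    Tendsto (fun t => ∫ x : ℝ, |u x t - u x t₀|) (nhdsWithin t₀ (Set.Icc 0 T)) (nhds 0)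
  init : ∀ x, u x 0 = u₀ x
  entropy : ∀ φ : ℝ → ℝ → ℝ, ContDiff ℝ 1 (fun p : ℝ × ℝ => φ p.1 p.2) →
    HasCompactSupport (fun p : ℝ × ℝ => φ p.1 p.2) → (∀ x t, 0 ≤ φ x t) → ∀ c : ℝ,
    0 ≤ (∫ t in (0:ℝ)..T, ∫ x : ℝ, |u x t - c| * deriv (fun s => φ x s) t)
      + ∫ t in (0:ℝ)..T, ∫ x : ℝ, ∫ h in (0:ℝ)..δ,
          ((φ (x + h) t - φ x t) / h) * entFlux g (u x t) (u (x + h) t) c * ω h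

/-- Kruzhkov entropy solution of the local conservation law `u_t + f(u)_x = 0`. -/
structure IsEntropySolLocal (T : ℝ) (f : ℝ → ℝ) (u₀ : ℝ → ℝ) (u : ℝ → ℝ → ℝ) : Prop where
  bounded : ∃ M, ∀ x t, |u x t| ≤ M
  integrable : ∀ t ∈ Set.Icc (0:ℝ) T, Integrable (fun x => u x t)
  contL1 : ∀ t₀ ∈ Set.Icc (0:ℝ) T,
    Tendsto (fun t => ∫ x : ℝ, |u x t - u x t₀|) (nhdsWithin t₀ (Set.Icc 0 T)) (nhds 0)
  init : ∀ x, u x 0 = u₀ x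
  entropy : ∀ φ : ℝ → ℝ → ℝ, ContDiff ℝ 1 (fun p : ℝ × ℝ => φ p.1 p.2) →
    HasCompactSupport (fun p : ℝ × ℝ => φ p.1 p.2) → (∀ x t, 0 ≤ φ x t) → ∀ c : ℝ,
    0 ≤ ∫ t in (0:ℝ)..T, ∫ x : ℝ,
        (|u x t - c| * deriv (fun s => φ x s) t
          + Real.sign (u x t - c) * (f (u x t) - f c) * deriv (fun y => φ y t) x)


lemma rDx_le (δ Δx : ℝ) (hδ : 0 < δ) (hΔx : 0 < Δx) : (gridR δ Δx : ℝ) * Δx ≤ δ := by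
  have h1 : (gridR δ Δx : ℝ) ≤ δ / Δx := Nat.floor_le (by positivity)
  calc (gridR δ Δx : ℝ) * Δx ≤ (δ / Δx) * Δx := by nlinarith
    _ = δ := by field_simp

lemma qWeight_nonneg (δ Δx : ℝ) (hδ : 0 < δ) (hΔx : 0 < Δx) (ω : ℝ → ℝ)
    (hω : AdmissibleKernel δ ω) (k : ℕ) : 0 ≤ qWeight ω δ Δx k := by
  apply add_nonneg
  · apply mul_nonneg
    · apply one_div_nonneg.2; positivity
    · exact intervalIntegral.integral_nonneg (by nlinarith [Nat.cast_nonneg (α := ℝ) k])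
        (fun x _ => hω.nonneg x)
  · apply mul_nonneg
    · apply div_nonneg (by split_ifs <;> norm_num); positivity
    · exact intervalIntegral.integral_nonneg (rDx_le δ Δx hδ hΔx) (fun x _ => hω.nonneg x)

lemma qWeight_sum_le (δ Δx : ℝ) (hδ : 0 < δ) (hΔx : 0 < Δx) (ω : ℝ → ℝ)
    (hω : AdmissibleKernel δ ω) :
    ∑ k ∈ Finset.Icc 1 (gridR1 δ Δx), qWeight ω δ Δx k ≤ 1 / Δx := by
  set r := gridR δ Δx with hr
  set R := gridR1 δ Δx with hR
  have hint : ∀ a b : ℝ, IntervalIntegrable ω volume a b :=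
    fun a b => hω.integrable.intervalIntegrable
  have hnn : ∀ a b : ℝ, a ≤ b → 0 ≤ ∫ h in a..b, ω h :=
    fun a b hab => intervalIntegral.integral_nonneg hab (fun x _ => hω.nonneg x)
  have hrd : (r : ℝ) * Δx ≤ δ := rDx_le δ Δx hδ hΔx
  set T : ℝ := ∫ h in ((r : ℝ) * Δx)..δ, ω h with hT
  have hTnn : 0 ≤ T := hnn _ _ hrd
  have hR1 : 1 ≤ R := le_max_right _ _
  have hR1' : (1:ℝ) ≤ (R:ℝ) := by exact_mod_cast hR1
  have hkey : ∀ k ∈ Finset.Icc 1 R, qWeight ω δ Δx k ≤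
      (1/Δx) * ((∫ h in (((k:ℝ)-1) * Δx)..((k:ℝ) * Δx), ω h) + (if k = r then T else 0)) := by
    intro k hk
    have hk1 : 1 ≤ k := (Finset.mem_Icc.1 hk).1
    have hk1' : (1:ℝ) ≤ (k:ℝ) := by exact_mod_cast hk1
    have hInn : 0 ≤ ∫ h in (((k:ℝ)-1) * Δx)..((k:ℝ) * Δx), ω h := hnn _ _ (by nlinarith)
    rw [qWeight, mul_add]
    simp only [← hr, ← hR]
    apply add_le_add
    · apply mul_le_mul_of_nonneg_right _ hInn
      rw [div_le_div_iff₀ (by nlinarith) hΔx]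
      nlinarith
    · split_ifs with h
      · simp only [one_div]
        have h1 : ((R:ℝ) * Δx)⁻¹ ≤ Δx⁻¹ := by
          apply inv_anti₀ hΔx; nlinarith
        exact mul_le_mul_of_nonneg_right h1 hTnn
      · simp
  calc ∑ k ∈ Finset.Icc 1 R, qWeight ω δ Δx k
      ≤ ∑ k ∈ Finset.Icc 1 R, (1/Δx) * ((∫ h in (((k:ℝ)-1) * Δx)..((k:ℝ) * Δx), ω h)
          + (if k = r then T else 0)) := Finset.sum_le_sum hkey
    _ = (1/Δx) * ((∑ k ∈ Finset.Icc 1 R, ∫ h in (((k:ℝ)-1) * Δx)..((k:ℝ) * Δx), ω h)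
          + ∑ k ∈ Finset.Icc 1 R, (if k = r then T else 0)) := by
        rw [← Finset.mul_sum, Finset.sum_add_distrib]
    _ ≤ (1/Δx) * 1 := by
        apply mul_le_mul_of_nonneg_left _ (by positivity)
        have hsum : (∑ k ∈ Finset.Icc 1 R, ∫ h in (((k:ℝ)-1) * Δx)..((k:ℝ) * Δx), ω h)
            = ∫ h in (0:ℝ)..((R:ℝ)*Δx), ω h := by
          rw [← Finset.Ico_add_one_right_eq_Icc, Finset.sum_Ico_eq_sum_range]
          show ∑ i ∈ Finset.range (R + 1 - 1), _ = _
          rw [show R + 1 - 1 = R from rfl]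
          have h2 := intervalIntegral.sum_integral_adjacent_intervals
            (a := fun i : ℕ => (i:ℝ)*Δx) (n := R) (μ := volume) (f := ω) (fun k _ => hint _ _)
          simp only [Nat.cast_zero, zero_mul] at h2
          rw [← h2]
          apply Finset.sum_congr rfl
          intro i _
          push_cast
          ring_nf
        have hite : (∑ k ∈ Finset.Icc 1 R, (if k = r then T else 0))
            = if r ∈ Finset.Icc 1 R then T else 0 := Finset.sum_ite_eq' _ _ _
        rw [hsum, hite]
        rcases Nat.eq_zero_or_pos r with h0 | hpos
        · have hRe : R = 1 := by rw [hR, gridR1, ← hr, h0]; decide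
          have hnotmem : r ∉ Finset.Icc 1 R := by simp [h0]
          rw [if_neg hnotmem, add_zero, hRe]
          have hδΔx : δ ≤ Δx := by
            have h3 : δ/Δx < 1 := Nat.floor_eq_zero.mp h0
            have := (div_lt_one hΔx).1 h3
            linarith
          have htail : (∫ h in δ..Δx, ω h) = 0 := by
            rw [intervalIntegral.integral_of_le hδΔx]
            apply setIntegral_eq_zero_of_forall_eq_zero
            intro x hx
            exact hω.supp x (fun hmem => absurd hmem.2 (not_le.2 hx.1))
          have hadd := intervalIntegral.integral_add_adjacent_intervals
            (hint 0 δ) (hint δ Δx)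
          push_cast
          rw [one_mul, ← hadd, hω.normalized, htail, add_zero]
        · have hRe : R = r := by rw [hR, gridR1, ← hr, max_eq_left hpos]
          have hmem : r ∈ Finset.Icc 1 R := by rw [hRe]; exact Finset.mem_Icc.2 ⟨hpos, le_rfl⟩
          rw [if_pos hmem, hRe, hT]
          have hadd := intervalIntegral.integral_add_adjacent_intervals
            (hint 0 ((r:ℝ)*Δx)) (hint ((r:ℝ)*Δx) δ)
          rw [hadd, hω.normalized]
    _ = 1/Δx := mul_one _

lemma supAbsDeriv1_nonneg (g : ℝ → ℝ → ℝ) (B₁ B₂ : ℝ) : 0 ≤ supAbsDeriv1 g B₁ B₂ :=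
  Real.sSup_nonneg (by rintro x ⟨p, _, rfl⟩; exact abs_nonneg _)

lemma supAbsDeriv2_nonneg (g : ℝ → ℝ → ℝ) (B₁ B₂ : ℝ) : 0 ≤ supAbsDeriv2 g B₁ B₂ :=
  Real.sSup_nonneg (by rintro x ⟨p, _, rfl⟩; exact abs_nonneg _)

lemma lip2 (B₁ B₂ : ℝ) (g : ℝ → ℝ → ℝ)
    (hgC1 : ContDiffOn ℝ 1 (fun p : ℝ × ℝ => g p.1 p.2) (Set.Icc B₁ B₂ ×ˢ Set.Icc B₁ B₂)) :
    ∀ a ∈ Set.Icc B₁ B₂, ∀ b ∈ Set.Icc B₁ B₂, ∀ b' ∈ Set.Icc B₁ B₂,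
      |g a b - g a b'| ≤ supAbsDeriv2 g B₁ B₂ * |b - b'| := by
  intro a ha b hb b' hb'
  rcases lt_or_ge B₁ B₂ with hlt | hge
  · have hsU : UniqueDiffOn ℝ (Set.Icc B₁ B₂) := uniqueDiffOn_Icc hlt
    have hrU : UniqueDiffOn ℝ (Set.Icc B₁ B₂ ×ˢ Set.Icc B₁ B₂) := hsU.prod hsU
    have hGd : DifferentiableOn ℝ (fun p : ℝ × ℝ => g p.1 p.2)
        (Set.Icc B₁ B₂ ×ˢ Set.Icc B₁ B₂) := hgC1.differentiableOn one_ne_zero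
    have hslice : ∀ x ∈ Set.Icc B₁ B₂, ∀ y ∈ Set.Icc B₁ B₂,
        HasDerivWithinAt (fun z => g x z)
          ((fderivWithin ℝ (fun p : ℝ × ℝ => g p.1 p.2)
            (Set.Icc B₁ B₂ ×ˢ Set.Icc B₁ B₂) (x, y)) ((0:ℝ), (1:ℝ))) (Set.Icc B₁ B₂) y := by
      intro x hx y hy
      have h1 := (hGd (x, y) ⟨hx, hy⟩).hasFDerivWithinAt
      have h2 : HasFDerivWithinAt (fun z : ℝ => (x, z))
          ((0 : ℝ →L[ℝ] ℝ).prod (ContinuousLinearMap.id ℝ ℝ)) (Set.Icc B₁ B₂) y :=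
        ((HasFDerivAt.prodMk (hasFDerivAt_const x y) (hasFDerivAt_id y)).hasFDerivWithinAt)
      have h3 := h1.comp y h2 (fun z hz => ⟨hx, hz⟩)
      have h4 := h3.hasDerivWithinAt
      simpa [Function.comp_def] using h4
    obtain ⟨C, hC⟩ := (isCompact_Icc.prod isCompact_Icc).exists_bound_of_continuousOn
      (hgC1.continuousOn_fderivWithin hrU le_rfl)
    have hbdd : BddAbove ((fun p : ℝ × ℝ =>
        |derivWithin (fun b => g p.1 b) (Set.Icc B₁ B₂) p.2|) ''
        (Set.Icc B₁ B₂ ×ˢ Set.Icc B₁ B₂)) := by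
      refine ⟨C, ?_⟩
      rintro y ⟨p, hp, rfl⟩
      have hd := (hslice p.1 hp.1 p.2 hp.2).derivWithin (hsU p.2 hp.2)
      show |derivWithin (fun b => g p.1 b) (Set.Icc B₁ B₂) p.2| ≤ C
      rw [← Real.norm_eq_abs, hd]
      calc ‖(fderivWithin ℝ (fun p : ℝ × ℝ => g p.1 p.2)
              (Set.Icc B₁ B₂ ×ˢ Set.Icc B₁ B₂) (p.1, p.2)) ((0:ℝ), (1:ℝ))‖
          ≤ ‖fderivWithin ℝ (fun p : ℝ × ℝ => g p.1 p.2)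
              (Set.Icc B₁ B₂ ×ˢ Set.Icc B₁ B₂) (p.1, p.2)‖ * ‖((0:ℝ), (1:ℝ))‖ :=
            ContinuousLinearMap.le_opNorm _ _
        _ ≤ C * 1 := by
            apply mul_le_mul (hC (p.1, p.2) hp) _ (norm_nonneg _)
              ((norm_nonneg _).trans (hC (p.1, p.2) hp))
            rw [Prod.norm_def]; simp
        _ = C := mul_one _
    have hL2 : ∀ x ∈ Set.Icc B₁ B₂, ∀ y ∈ Set.Icc B₁ B₂,
        |derivWithin (fun b => g x b) (Set.Icc B₁ B₂) y| ≤ supAbsDeriv2 g B₁ B₂ := by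
      intro x hx y hy
      exact le_csSup hbdd ⟨(x, y), ⟨hx, hy⟩, rfl⟩
    have hdiff : DifferentiableOn ℝ (fun z => g a z) (Set.Icc B₁ B₂) :=
      fun y hy => (hslice a ha y hy).differentiableWithinAt
    have h5 := Convex.norm_image_sub_le_of_norm_derivWithin_le hdiff
      (fun y hy => by rw [Real.norm_eq_abs]; exact hL2 a ha y hy) (convex_Icc _ _) hb' hb
    simpa [Real.norm_eq_abs] using h5
  · have h1 : b = b' :=
      le_antisymm (hb.2.trans (hge.trans hb'.1)) (hb'.2.trans (hge.trans hb.1))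
    simp [h1]

lemma lip1 (B₁ B₂ : ℝ) (g : ℝ → ℝ → ℝ)
    (hgC1 : ContDiffOn ℝ 1 (fun p : ℝ × ℝ => g p.1 p.2) (Set.Icc B₁ B₂ ×ˢ Set.Icc B₁ B₂)) :
    ∀ b ∈ Set.Icc B₁ B₂, ∀ a ∈ Set.Icc B₁ B₂, ∀ a' ∈ Set.Icc B₁ B₂,
      |g a b - g a' b| ≤ supAbsDeriv1 g B₁ B₂ * |a - a'| := by
  intro b hb a ha a' ha'
  rcases lt_or_ge B₁ B₂ with hlt | hge
  · have hsU : UniqueDiffOn ℝ (Set.Icc B₁ B₂) := uniqueDiffOn_Icc hlt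
    have hrU : UniqueDiffOn ℝ (Set.Icc B₁ B₂ ×ˢ Set.Icc B₁ B₂) := hsU.prod hsU
    have hGd : DifferentiableOn ℝ (fun p : ℝ × ℝ => g p.1 p.2)
        (Set.Icc B₁ B₂ ×ˢ Set.Icc B₁ B₂) := hgC1.differentiableOn one_ne_zero
    have hslice : ∀ y ∈ Set.Icc B₁ B₂, ∀ x ∈ Set.Icc B₁ B₂,
        HasDerivWithinAt (fun z => g z y)
          ((fderivWithin ℝ (fun p : ℝ × ℝ => g p.1 p.2)
            (Set.Icc B₁ B₂ ×ˢ Set.Icc B₁ B₂) (x, y)) ((1:ℝ), (0:ℝ))) (Set.Icc B₁ B₂) x := by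
      intro y hy x hx
      have h1 := (hGd (x, y) ⟨hx, hy⟩).hasFDerivWithinAt
      have h2 : HasFDerivWithinAt (fun z : ℝ => (z, y))
          ((ContinuousLinearMap.id ℝ ℝ).prod (0 : ℝ →L[ℝ] ℝ)) (Set.Icc B₁ B₂) x :=
        ((HasFDerivAt.prodMk (hasFDerivAt_id x) (hasFDerivAt_const y x)).hasFDerivWithinAt)
      have h3 := h1.comp x h2 (fun z (hz : z ∈ Set.Icc B₁ B₂) => (⟨hz, hy⟩ : (z, y) ∈ Set.Icc B₁ B₂ ×ˢ Set.Icc B₁ B₂))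
      have h4 := h3.hasDerivWithinAt
      simpa [Function.comp_def] using h4
    obtain ⟨C, hC⟩ := (isCompact_Icc.prod isCompact_Icc).exists_bound_of_continuousOn
      (hgC1.continuousOn_fderivWithin hrU le_rfl)
    have hbdd : BddAbove ((fun p : ℝ × ℝ =>
        |derivWithin (fun a => g a p.2) (Set.Icc B₁ B₂) p.1|) ''
        (Set.Icc B₁ B₂ ×ˢ Set.Icc B₁ B₂)) := by
      refine ⟨C, ?_⟩
      rintro y ⟨p, hp, rfl⟩
      have hd := (hslice p.2 hp.2 p.1 hp.1).derivWithin (hsU p.1 hp.1)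
      show |derivWithin (fun a => g a p.2) (Set.Icc B₁ B₂) p.1| ≤ C
      rw [← Real.norm_eq_abs, hd]
      calc ‖(fderivWithin ℝ (fun p : ℝ × ℝ => g p.1 p.2)
              (Set.Icc B₁ B₂ ×ˢ Set.Icc B₁ B₂) (p.1, p.2)) ((1:ℝ), (0:ℝ))‖
          ≤ ‖fderivWithin ℝ (fun p : ℝ × ℝ => g p.1 p.2)
              (Set.Icc B₁ B₂ ×ˢ Set.Icc B₁ B₂) (p.1, p.2)‖ * ‖((1:ℝ), (0:ℝ))‖ :=
            ContinuousLinearMap.le_opNorm _ _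
        _ ≤ C * 1 := by
            apply mul_le_mul (hC (p.1, p.2) hp) _ (norm_nonneg _)
              ((norm_nonneg _).trans (hC (p.1, p.2) hp))
            rw [Prod.norm_def]; simp
        _ = C := mul_one _
    have hL1 : ∀ x ∈ Set.Icc B₁ B₂, ∀ y ∈ Set.Icc B₁ B₂,
        |derivWithin (fun a => g a y) (Set.Icc B₁ B₂) x| ≤ supAbsDeriv1 g B₁ B₂ := by
      intro x hx y hy
      exact le_csSup hbdd ⟨(x, y), ⟨hx, hy⟩, rfl⟩
    have hdiff : DifferentiableOn ℝ (fun z => g z b) (Set.Icc B₁ B₂) :=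
      fun x hx => (hslice b hb x hx).differentiableWithinAt
    have h5 := Convex.norm_image_sub_le_of_norm_derivWithin_le hdiff
      (fun x hx => by rw [Real.norm_eq_abs]; exact hL1 x hx b hb) (convex_Icc _ _) ha' ha
    simpa [Real.norm_eq_abs] using h5
  · have h1 : a = a' :=
      le_antisymm (ha.2.trans (hge.trans ha'.1)) (ha'.2.trans (hge.trans ha.1))
    simp [h1]

/-- discrete maximum principle for the nonlocal scheme. -/
theorem discrete_maximum_principle
    (δ Δx Δt B₁ B₂ : ℝ) (hδ : 0 < δ) (hΔx : 0 < Δx) (hΔt : 0 < Δt)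
    (ω : ℝ → ℝ) (hω : AdmissibleKernel δ ω)
    (g : ℝ → ℝ → ℝ)
    (u : ℕ → ℤ → ℝ)
    (hrec : ∀ n, u (n + 1) = schemeStep g Δt (qWeight ω δ Δx) (gridR1 δ Δx) (u n))
    (hB₁ : IsGLB (Set.range (u 0)) B₁) (hB₂ : IsLUB (Set.range (u 0)) B₂)
    (hg1 : ∀ a a' b, a ∈ Set.Icc B₁ B₂ → a' ∈ Set.Icc B₁ B₂ → b ∈ Set.Icc B₁ B₂ →
      a ≤ a' → g a b ≤ g a' b)
    (hg2 : ∀ a b b', a ∈ Set.Icc B₁ B₂ → b ∈ Set.Icc B₁ B₂ → b' ∈ Set.Icc B₁ B₂ →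
      b ≤ b' → g a b' ≤ g a b)
    (hgC1 : ContDiffOn ℝ 1 (fun p : ℝ × ℝ => g p.1 p.2) (Set.Icc B₁ B₂ ×ˢ Set.Icc B₁ B₂))
    (hCFL : Δt / Δx * (supAbsDeriv1 g B₁ B₂ + supAbsDeriv2 g B₁ B₂) ≤ 1)
    :
    ∀ n j, u n j ∈ Set.Icc B₁ B₂ := by
  have hWnn : ∀ k, 0 ≤ qWeight ω δ Δx k := qWeight_nonneg δ Δx hδ hΔx ω hω
  have hWsum := qWeight_sum_le δ Δx hδ hΔx ω hω
  have hL1 := supAbsDeriv1_nonneg g B₁ B₂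
  have hL2 := supAbsDeriv2_nonneg g B₁ B₂
  have hB12 : B₁ ≤ B₂ := le_trans (hB₁.1 ⟨0, rfl⟩) (hB₂.1 ⟨0, rfl⟩)
  have hB2mem : B₂ ∈ Set.Icc B₁ B₂ := ⟨hB12, le_rfl⟩
  have hB1mem : B₁ ∈ Set.Icc B₁ B₂ := ⟨le_rfl, hB12⟩
  have hlip1 := lip1 B₁ B₂ g hgC1
  have hlip2 := lip2 B₁ B₂ g hgC1
  set L1 := supAbsDeriv1 g B₁ B₂
  set L2 := supAbsDeriv2 g B₁ B₂
  intro n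
  induction n with
  | zero => intro j; exact ⟨hB₁.1 ⟨j, rfl⟩, hB₂.1 ⟨j, rfl⟩⟩
  | succ n ih =>
    intro j
    rw [hrec n]
    unfold schemeStep
    rw [Set.mem_Icc]
    set R := gridR1 δ Δx
    have hvj := ih j
    set S := ∑ k ∈ Finset.Icc 1 R, qWeight ω δ Δx k *
      (g (u n j) (u n (j + (k:ℤ))) - g (u n (j - (k:ℤ))) (u n j)) with hS
    constructor
    · -- lower bound
      have hterm : ∀ k ∈ Finset.Icc 1 R, qWeight ω δ Δx k *
          (g (u n j) (u n (j + (k:ℤ))) - g (u n (j - (k:ℤ))) (u n j))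
          ≤ qWeight ω δ Δx k * ((L1 + L2) * (u n j - B₁)) := by
        intro k _
        have h1 : g (u n j) (u n (j + (k:ℤ))) ≤ g (u n j) B₁ :=
          hg2 (u n j) B₁ (u n (j + (k:ℤ))) hvj hB1mem (ih (j + (k:ℤ))) (ih (j + (k:ℤ))).1
        have h2 : g B₁ (u n j) ≤ g (u n (j - (k:ℤ))) (u n j) :=
          hg1 B₁ (u n (j - (k:ℤ))) (u n j) hB1mem (ih (j - (k:ℤ))) hvj (ih (j - (k:ℤ))).1
        have habs : |u n j - B₁| = u n j - B₁ := abs_of_nonneg (by linarith [hvj.1])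
        have h3 : g (u n j) B₁ - g B₁ B₁ ≤ L1 * (u n j - B₁) := by
          calc g (u n j) B₁ - g B₁ B₁ ≤ |g (u n j) B₁ - g B₁ B₁| := le_abs_self _
            _ ≤ L1 * |u n j - B₁| := hlip1 B₁ hB1mem (u n j) hvj B₁ hB1mem
            _ = L1 * (u n j - B₁) := by rw [habs]
        have h4 : g B₁ B₁ - g B₁ (u n j) ≤ L2 * (u n j - B₁) := by
          calc g B₁ B₁ - g B₁ (u n j) ≤ |g B₁ B₁ - g B₁ (u n j)| := le_abs_self _
            _ ≤ L2 * |B₁ - u n j| := hlip2 B₁ hB1mem B₁ hB1mem (u n j) hvj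
            _ = L2 * (u n j - B₁) := by rw [abs_sub_comm, habs]
        have hD : g (u n j) (u n (j + (k:ℤ))) - g (u n (j - (k:ℤ))) (u n j)
            ≤ (L1 + L2) * (u n j - B₁) := by
          have hring : (L1 + L2) * (u n j - B₁) = L1 * (u n j - B₁) + L2 * (u n j - B₁) := by
            ring
          linarith
        exact mul_le_mul_of_nonneg_left hD (hWnn k)
      have hsum := Finset.sum_le_sum hterm
      rw [← hS, ← Finset.sum_mul] at hsum
      have hC0 : 0 ≤ (L1 + L2) * (u n j - B₁) :=
        mul_nonneg (add_nonneg hL1 hL2) (by linarith [hvj.1])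
      have h6 : (∑ k ∈ Finset.Icc 1 R, qWeight ω δ Δx k) * ((L1 + L2) * (u n j - B₁))
          ≤ (1/Δx) * ((L1 + L2) * (u n j - B₁)) := mul_le_mul_of_nonneg_right hWsum hC0
      have h7 : Δt * ((1/Δx) * ((L1 + L2) * (u n j - B₁))) ≤ u n j - B₁ := by
        have heq : Δt * ((1/Δx) * ((L1 + L2) * (u n j - B₁)))
            = (Δt/Δx * (L1 + L2)) * (u n j - B₁) := by ring
        have h8 : (Δt/Δx * (L1 + L2)) * (u n j - B₁) ≤ 1 * (u n j - B₁) :=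
          mul_le_mul_of_nonneg_right hCFL (by linarith [hvj.1])
        linarith
      have h9 : Δt * S ≤ Δt * ((1/Δx) * ((L1 + L2) * (u n j - B₁))) :=
        mul_le_mul_of_nonneg_left (by linarith) hΔt.le
      linarith
    · -- upper bound
      have hterm : ∀ k ∈ Finset.Icc 1 R, -(qWeight ω δ Δx k * ((L1 + L2) * (B₂ - u n j)))
          ≤ qWeight ω δ Δx k *
          (g (u n j) (u n (j + (k:ℤ))) - g (u n (j - (k:ℤ))) (u n j)) := by
        intro k _
        have h1 : g (u n j) B₂ ≤ g (u n j) (u n (j + (k:ℤ))) :=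
          hg2 (u n j) (u n (j + (k:ℤ))) B₂ hvj (ih (j + (k:ℤ))) hB2mem (ih (j + (k:ℤ))).2
        have h2 : g (u n (j - (k:ℤ))) (u n j) ≤ g B₂ (u n j) :=
          hg1 (u n (j - (k:ℤ))) B₂ (u n j) (ih (j - (k:ℤ))) hB2mem hvj (ih (j - (k:ℤ))).2
        have habs : |B₂ - u n j| = B₂ - u n j := abs_of_nonneg (by linarith [hvj.2])
        have h3 : g B₂ (u n j) - g B₂ B₂ ≤ L2 * (B₂ - u n j) := by
          calc g B₂ (u n j) - g B₂ B₂ ≤ |g B₂ (u n j) - g B₂ B₂| := le_abs_self _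
            _ ≤ L2 * |u n j - B₂| := hlip2 B₂ hB2mem (u n j) hvj B₂ hB2mem
            _ = L2 * (B₂ - u n j) := by rw [abs_sub_comm, habs]
        have h4 : g B₂ B₂ - g (u n j) B₂ ≤ L1 * (B₂ - u n j) := by
          calc g B₂ B₂ - g (u n j) B₂ ≤ |g B₂ B₂ - g (u n j) B₂| := le_abs_self _
            _ ≤ L1 * |B₂ - u n j| := hlip1 B₂ hB2mem B₂ hB2mem (u n j) hvj
            _ = L1 * (B₂ - u n j) := by rw [habs]
        have hD : -((L1 + L2) * (B₂ - u n j))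
            ≤ g (u n j) (u n (j + (k:ℤ))) - g (u n (j - (k:ℤ))) (u n j) := by
          have hring : (L1 + L2) * (B₂ - u n j) = L1 * (B₂ - u n j) + L2 * (B₂ - u n j) := by
            ring
          linarith
        have := mul_le_mul_of_nonneg_left hD (hWnn k)
        rw [mul_neg] at this
        exact this
      have hsum := Finset.sum_le_sum hterm
      rw [← hS, Finset.sum_neg_distrib, ← Finset.sum_mul] at hsum
      have hC0 : 0 ≤ (L1 + L2) * (B₂ - u n j) :=
        mul_nonneg (add_nonneg hL1 hL2) (by linarith [hvj.2])
      have h6 : (∑ k ∈ Finset.Icc 1 R, qWeight ω δ Δx k) * ((L1 + L2) * (B₂ - u n j))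
          ≤ (1/Δx) * ((L1 + L2) * (B₂ - u n j)) := mul_le_mul_of_nonneg_right hWsum hC0
      have h7 : Δt * ((1/Δx) * ((L1 + L2) * (B₂ - u n j))) ≤ B₂ - u n j := by
        have heq : Δt * ((1/Δx) * ((L1 + L2) * (B₂ - u n j)))
            = (Δt/Δx * (L1 + L2)) * (B₂ - u n j) := by ring
        have h8 : (Δt/Δx * (L1 + L2)) * (B₂ - u n j) ≤ 1 * (B₂ - u n j) :=
          mul_le_mul_of_nonneg_right hCFL (by linarith [hvj.2])
        linarith
      have h9 : Δt * (-((1/Δx) * ((L1 + L2) * (B₂ - u n j)))) ≤ Δt * S :=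
        mul_le_mul_of_nonneg_left (by linarith) hΔt.le
      have h10 : Δt * (-((1/Δx) * ((L1 + L2) * (B₂ - u n j))))
          = -(Δt * ((1/Δx) * ((L1 + L2) * (B₂ - u n j)))) := by ring
      linarith
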